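/- For X ~ N(μ, σ²), the correlation between X and F(X) (where F is the CDF of X) equals √(3/π) ≈ 0.9772; equivalently LP(1;X) = √(3/π)·σ. -/

import Mathlib

open MeasureTheory Set ProbabilityTheory Filter Real Topology
open scoped NNReal ENNReal

namespace LP1Aux

lemma continuous_gpdf (m : ℝ) (v : ℝ≥0) : Continuous (gaussianPDFReal m v) := by
  unfold gaussianPDFReal
  fun_prop

lemma hasDerivAt_gpdf (m : ℝ) (v : ℝ≥0) (hv : v ≠ 0) (x : ℝ) :
    HasDerivAt (gaussianPDFReal m v) (-((x - m) / v) * gaussianPDFReal m v x) x := by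
  have hv' : (0:ℝ) < v := by
    have := hv; positivity
  have h0 : HasDerivAt (fun x : ℝ => (x - m)^2) (2 * (x - m)) x := by
    simpa using ((hasDerivAt_id x).sub_const m).fun_pow 2
  have h0' := h0.const_mul (-(1 / (2*(v:ℝ))))
  have heq : (fun y : ℝ => -(1/(2*(v:ℝ))) * (y - m)^2)
      = fun y : ℝ => -(y - m)^2 / (2*(v:ℝ)) := by funext y; ring
  rw [heq] at h0'
  have h1 : HasDerivAt (fun x : ℝ => -(x - m)^2 / (2*(v:ℝ))) (-((x - m) / v)) x := by
    refine h0'.congr_deriv ?_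
    field_simp
  have h2 := (h1.exp).const_mul (√(2 * π * (v:ℝ)))⁻¹
  have heq2 : (fun y : ℝ => (√(2 * π * (v:ℝ)))⁻¹ * rexp (-(y - m)^2 / (2*(v:ℝ))))
      = gaussianPDFReal m v := by
    funext y; rw [gaussianPDFReal]
  rw [heq2] at h2
  refine h2.congr_deriv ?_
  rw [gaussianPDFReal]
  ring

lemma tendsto_gpdf_atTop (m : ℝ) (v : ℝ≥0) (hv : v ≠ 0) :
    Tendsto (gaussianPDFReal m v) atTop (𝓝 0) := by
  have hv' : (0:ℝ) < v := by have := hv; positivity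
  have h1 : Tendsto (fun x : ℝ => x - m) atTop atTop :=
    tendsto_atTop_add_const_right _ _ tendsto_id
  have h2 : Tendsto (fun x : ℝ => (x - m)^2) atTop atTop := by
    simpa [pow_two] using h1.atTop_mul_atTop₀ h1
  have h3 : Tendsto (fun x : ℝ => -(x - m)^2 / (2*(v:ℝ))) atTop atBot := by
    apply Tendsto.atBot_div_const (by positivity)
    exact tendsto_neg_atTop_atBot.comp h2
  have h4 : Tendsto (fun x : ℝ => rexp (-(x - m)^2 / (2*(v:ℝ)))) atTop (𝓝 0) :=
    Real.tendsto_exp_atBot.comp h3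
  have := h4.const_mul (√(2 * π * (v:ℝ)))⁻¹
  simpa [gaussianPDFReal_def] using this

lemma tendsto_gpdf_atBot (m : ℝ) (v : ℝ≥0) (hv : v ≠ 0) :
    Tendsto (gaussianPDFReal m v) atBot (𝓝 0) := by
  have hv' : (0:ℝ) < v := by have := hv; positivity
  have h1 : Tendsto (fun x : ℝ => x - m) atBot atBot :=
    tendsto_atBot_add_const_right _ _ tendsto_id
  have h2 : Tendsto (fun x : ℝ => (x - m)^2) atBot atTop := by
    simpa [pow_two] using h1.atBot_mul_atBot₀ h1
  have h3 : Tendsto (fun x : ℝ => -(x - m)^2 / (2*(v:ℝ))) atBot atBot := by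
    apply Tendsto.atBot_div_const (by positivity)
    exact tendsto_neg_atTop_atBot.comp h2
  have h4 : Tendsto (fun x : ℝ => rexp (-(x - m)^2 / (2*(v:ℝ)))) atBot (𝓝 0) :=
    Real.tendsto_exp_atBot.comp h3
  have := h4.const_mul (√(2 * π * (v:ℝ)))⁻¹
  simpa [gaussianPDFReal_def] using this

/-- the CDF as an integral -/
lemma cdf_eq_integral (m : ℝ) (v : ℝ≥0) (hv : v ≠ 0) (x : ℝ) :
    ((gaussianReal m v) (Iic x)).toReal = ∫ t in Iic x, gaussianPDFReal m v t := by
  rw [gaussianReal_apply_eq_integral m hv, ENNReal.toReal_ofReal]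
  exact setIntegral_nonneg measurableSet_Iic fun t _ => gaussianPDFReal_nonneg m v t

lemma hasDerivAt_cdf (m : ℝ) (v : ℝ≥0) (x : ℝ) :
    HasDerivAt (fun x => ∫ t in Iic x, gaussianPDFReal m v t) (gaussianPDFReal m v x) x := by
  have hi : Integrable (gaussianPDFReal m v) := integrable_gaussianPDFReal m v
  have key : (fun x => ∫ t in Iic x, gaussianPDFReal m v t)
      = fun x => (∫ t in Iic (0:ℝ), gaussianPDFReal m v t)
        + ∫ t in (0:ℝ)..x, gaussianPDFReal m v t := by
    funext y
    rw [← intervalIntegral.integral_Iic_sub_Iic hi.integrableOn hi.integrableOn]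
    ring
  rw [key]
  exact (intervalIntegral.integral_hasDerivAt_right hi.intervalIntegrable
    (continuous_gpdf m v).stronglyMeasurable.stronglyMeasurableAtFilter
    (continuous_gpdf m v).continuousAt).const_add _

lemma tendsto_cdf_integral_atTop (m : ℝ) (v : ℝ≥0) (hv : v ≠ 0) :
    Tendsto (fun x => ∫ t in Iic x, gaussianPDFReal m v t) atTop (𝓝 1) := by
  have h : (fun x => ∫ t in Iic x, gaussianPDFReal m v t) = cdf (gaussianReal m v) := by
    funext y
    rw [← cdf_eq_integral m v hv, cdf_eq_real, measureReal_def]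
  rw [h]
  exact tendsto_cdf_atTop _

lemma tendsto_cdf_integral_atBot (m : ℝ) (v : ℝ≥0) (hv : v ≠ 0) :
    Tendsto (fun x => ∫ t in Iic x, gaussianPDFReal m v t) atBot (𝓝 0) := by
  have h : (fun x => ∫ t in Iic x, gaussianPDFReal m v t) = cdf (gaussianReal m v) := by
    funext y
    rw [← cdf_eq_integral m v hv, cdf_eq_real, measureReal_def]
  rw [h]
  exact tendsto_cdf_atBot _

lemma cdf_integral_mem (m : ℝ) (v : ℝ≥0) (hv : v ≠ 0) (x : ℝ) :
    0 ≤ (∫ t in Iic x, gaussianPDFReal m v t) ∧ (∫ t in Iic x, gaussianPDFReal m v t) ≤ 1 := by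
  rw [← cdf_eq_integral m v hv]
  constructor
  · exact ENNReal.toReal_nonneg
  · exact ENNReal.toReal_le_of_le_ofReal zero_le_one (by simpa using prob_le_one)

/-- integral against the gaussian measure as a Lebesgue integral -/
lemma integral_gaussianReal (m : ℝ) (v : ℝ≥0) (hv : v ≠ 0) (g : ℝ → ℝ) :
    ∫ x, g x ∂(gaussianReal m v) = ∫ x, g x * gaussianPDFReal m v x := by
  rw [gaussianReal_of_var_ne_zero m hv]
  have h : gaussianPDF m v = fun x => ((Real.toNNReal (gaussianPDFReal m v x) : ℝ≥0) : ℝ≥0∞) := by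
    funext x; rfl
  rw [h, integral_withDensity_eq_integral_smul
    ((measurable_gaussianPDFReal m v).real_toNNReal)]
  congr 1
  funext x
  simp [NNReal.smul_def, Real.coe_toNNReal _ (gaussianPDFReal_nonneg m v x), mul_comm]


lemma integrable_sub_mul_gpdf (m : ℝ) (v : ℝ≥0) (hv : v ≠ 0) :
    Integrable (fun x : ℝ => (x - m) * gaussianPDFReal m v x) := by
  have hv' : (0:ℝ) < v := by have := hv; positivity
  have base : Integrable (fun y : ℝ => y * rexp (-(1/(2*(v:ℝ))) * y^2)) :=
    integrable_mul_exp_neg_mul_sq (by positivity)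
  have base2 := (base.const_mul (√(2 * π * (v:ℝ)))⁻¹).comp_sub_right m
  refine base2.congr (Filter.Eventually.of_forall fun x => ?_)
  show (√(2 * π * (v:ℝ)))⁻¹ * ((x - m) * rexp (-(1/(2*(v:ℝ))) * (x - m)^2))
      = (x - m) * gaussianPDFReal m v x
  rw [gaussianPDFReal, show -(1/(2*(v:ℝ))) * (x - m)^2 = -(x - m)^2 / (2*(v:ℝ)) by ring]
  ring

lemma key_const (m σ : ℝ) (hσ : 0 < σ) (v : ℝ≥0) (hvσ : (v:ℝ) = σ^2) (x : ℝ) :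
    σ / (2*√π) * gaussianPDFReal m (v/2) x = σ^2 * gaussianPDFReal m v x ^ 2 := by
  have hπ := pi_pos
  unfold gaussianPDFReal
  have hv2 : ((v/2 : ℝ≥0):ℝ) = σ^2/2 := by push_cast [hvσ]; ring
  rw [hv2, hvσ]
  rw [show 2*(σ^2/2) = σ^2 by ring, show 2*π*(σ^2/2) = π*σ^2 by ring,
    Real.sqrt_mul hπ.le, Real.sqrt_sq hσ.le]
  rw [mul_pow, inv_pow, Real.sq_sqrt (by positivity), sq (rexp _), ← Real.exp_add,
    show -(x - m)^2/(2*σ^2) + -(x - m)^2/(2*σ^2) = -(x - m)^2/σ^2 by ring]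
  have hs : √π * √π = π := Real.mul_self_sqrt hπ.le
  have hsne : √π ≠ 0 := by positivity
  field_simp
  linear_combination (-1 : ℝ) * hs

lemma cont_cdf_integral (m : ℝ) (v : ℝ≥0) :
    Continuous (fun x => ∫ t in Iic x, gaussianPDFReal m v t) :=
  continuous_iff_continuousAt.mpr fun x => (hasDerivAt_cdf m v x).continuousAt

lemma bdd_cdf_sub_half (m : ℝ) (v : ℝ≥0) (hv : v ≠ 0) (x : ℝ) :
    ‖(∫ t in Iic x, gaussianPDFReal m v t) - 1/2‖ ≤ 1/2 := by
  obtain ⟨h0, h1⟩ := cdf_integral_mem m v hv x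
  rw [Real.norm_eq_abs, abs_le]
  constructor <;> linarith

lemma integrable_one (m : ℝ) (v : ℝ≥0) (hv : v ≠ 0) :
    Integrable (fun x => ((∫ t in Iic x, gaussianPDFReal m v t) - 1/2)
      * gaussianPDFReal m v x) :=
  (integrable_gaussianPDFReal m v).bdd_mul
    ((cont_cdf_integral m v).sub continuous_const).aestronglyMeasurable
    (c := 1/2) (Filter.Eventually.of_forall (bdd_cdf_sub_half m v hv))

lemma integrable_two (m : ℝ) (v : ℝ≥0) (hv : v ≠ 0) :
    Integrable (fun x => (x - m) * ((∫ t in Iic x, gaussianPDFReal m v t) - 1/2)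
      * gaussianPDFReal m v x) := by
  have := (integrable_sub_mul_gpdf m v hv).bdd_mul
    ((cont_cdf_integral m v).sub continuous_const).aestronglyMeasurable
    (c := 1/2) (Filter.Eventually.of_forall (bdd_cdf_sub_half m v hv))
  refine this.congr (Filter.Eventually.of_forall fun x => ?_)
  simp only [Pi.sub_apply]
  ring

lemma integral_one (m : ℝ) (v : ℝ≥0) (hv : v ≠ 0) :
    ∫ x, ((∫ t in Iic x, gaussianPDFReal m v t) - 1/2) * gaussianPDFReal m v x = 0 := by
  set F := fun x => ∫ t in Iic x, gaussianPDFReal m v t with hFdef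
  have hderiv : ∀ x, HasDerivAt (fun x => (F x - 1/2)^2/2)
      ((F x - 1/2) * gaussianPDFReal m v x) x := by
    intro x
    have := (((hasDerivAt_cdf m v x).sub_const (1/2)).fun_pow 2).div_const 2
    refine this.congr_deriv ?_
    ring
  have hbot : Tendsto (fun x => (F x - 1/2)^2/2) atBot (𝓝 (1/8)) := by
    have := (((tendsto_cdf_integral_atBot m v hv).sub_const (1/2)).pow 2).div_const 2
    convert this using 2
    norm_num
  have htop : Tendsto (fun x => (F x - 1/2)^2/2) atTop (𝓝 (1/8)) := by
    have := (((tendsto_cdf_integral_atTop m v hv).sub_const (1/2)).pow 2).div_const 2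
    convert this using 2
    norm_num
  have := integral_of_hasDerivAt_of_tendsto hderiv (integrable_one m v hv) hbot htop
  simpa using this

lemma integral_two (m σ : ℝ) (hσ : 0 < σ) (v : ℝ≥0) (hvσ : (v:ℝ) = σ^2) :
    ∫ x, (x - m) * ((∫ t in Iic x, gaussianPDFReal m v t) - 1/2) * gaussianPDFReal m v x
      = σ / (2*√π) := by
  have hv : v ≠ 0 := by
    intro h
    rw [h] at hvσ
    simp at hvσ
    nlinarith
  have hv2 : v/2 ≠ 0 := by
    intro h
    apply hv
    simpa using congrArg (· * (2:ℝ≥0)) h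
  set c : ℝ := σ / (2*√π) with hc
  set f := gaussianPDFReal m v with hf
  set F := fun x => ∫ t in Iic x, gaussianPDFReal m v t with hFdef
  set F₂ := fun x => ∫ t in Iic x, gaussianPDFReal m (v/2) t with hF2def
  have hderiv : ∀ x, HasDerivAt (fun x => -(σ^2) * (f x * (F x - 1/2)) + c * F₂ x)
      ((x - m) * (F x - 1/2) * f x) x := by
    intro x
    have hd1 := ((hasDerivAt_gpdf m v hv x).fun_mul
      ((hasDerivAt_cdf m v x).sub_const (1/2))).const_mul (-(σ^2))
    have hd2 := (hasDerivAt_cdf m (v/2) x).const_mul c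
    have hsum := hd1.add hd2
    refine hsum.congr_deriv ?_
    have hk := key_const m σ hσ v hvσ x
    rw [hvσ]
    have hσ2 : σ^2 ≠ 0 := by positivity
    field_simp
    nlinarith [hk]
  have hbot : Tendsto (fun x => -(σ^2) * (f x * (F x - 1/2)) + c * F₂ x) atBot (𝓝 0) := by
    have h1 := ((tendsto_gpdf_atBot m v hv).mul
      ((tendsto_cdf_integral_atBot m v hv).sub_const (1/2))).const_mul (-(σ^2))
    have h2 := (tendsto_cdf_integral_atBot m (v/2) hv2).const_mul c
    have := h1.add h2
    convert this using 2
    norm_num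
  have htop : Tendsto (fun x => -(σ^2) * (f x * (F x - 1/2)) + c * F₂ x) atTop (𝓝 c) := by
    have h1 := ((tendsto_gpdf_atTop m v hv).mul
      ((tendsto_cdf_integral_atTop m v hv).sub_const (1/2))).const_mul (-(σ^2))
    have h2 := (tendsto_cdf_integral_atTop m (v/2) hv2).const_mul c
    have := h1.add h2
    convert this using 2
    norm_num
  have := integral_of_hasDerivAt_of_tendsto hderiv (integrable_two m v hv) hbot htop
  simpa using this

end LP1Aux

/-- For `X ~ N(m, σ²)` with CDF `F`, the first LP moment is
`LP(1;X) = E[X·√12(F(X) - 1/2)] = √(3/π)·σ`, and equivalently the correlation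
of `X` and `F(X)`, namely `Cov(X, F(X))/(σ·√(1/12))`, equals `√(3/π)`. -/
theorem lp1_normal_dagostino (m : ℝ) (σ : ℝ) (hσ : 0 < σ)
    (ν : Measure ℝ) (hν : ν = gaussianReal m ((⟨σ, hσ.le⟩ : NNReal) ^ 2))
    (F : ℝ → ℝ) (hF : ∀ x, F x = (ν (Iic x)).toReal) :
    (∫ x, x * (Real.sqrt 12 * (F x - 1 / 2)) ∂ν = Real.sqrt (3 / Real.pi) * σ) ∧
      (∫ x, (x - m) * (F x - 1 / 2) ∂ν) / (σ * Real.sqrt (1 / 12)) =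
        Real.sqrt (3 / Real.pi) := by
  have hπ := Real.pi_pos
  set v : ℝ≥0 := (⟨σ, hσ.le⟩ : NNReal)^2 with hvdef
  have hvσ : (v:ℝ) = σ^2 := by rw [hvdef]; rfl
  have hv : v ≠ 0 := by
    intro h
    rw [h] at hvσ
    simp at hvσ
    nlinarith
  subst hν
  have hF' : ∀ x, F x = ∫ t in Iic x, gaussianPDFReal m v t := fun x => by
    rw [hF x, LP1Aux.cdf_eq_integral m v hv]
  have h1 := LP1Aux.integral_one m v hv
  have h2 := LP1Aux.integral_two m σ hσ v hvσ
  have hint1 := LP1Aux.integrable_one m v hv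
  have hint2 := LP1Aux.integrable_two m v hv
  have hs3 : √12 = 2*√3 := by
    rw [show (12:ℝ) = 2^2*3 by norm_num, Real.sqrt_mul (by positivity),
      Real.sqrt_sq (by norm_num : (0:ℝ) ≤ 2)]
  have h3π : √(3/π) = √3/√π := Real.sqrt_div (by norm_num) π
  have hsπ : √π ≠ 0 := by positivity
  have hsππ : √π * √π = π := Real.mul_self_sqrt hπ.le
  constructor
  · rw [LP1Aux.integral_gaussianReal m v hv]
    rw [show (fun x => x * (√12 * (F x - 1/2)) * gaussianPDFReal m v x)
        = (fun x => √12 * ((x - m) * ((∫ t in Iic x, gaussianPDFReal m v t) - 1/2)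
            * gaussianPDFReal m v x)
          + (√12 * m) * (((∫ t in Iic x, gaussianPDFReal m v t) - 1/2)
            * gaussianPDFReal m v x))
      from funext fun x => by rw [hF' x]; ring]
    rw [integral_add (hint2.const_mul _) (hint1.const_mul _), integral_const_mul,
      integral_const_mul, h1, h2, hs3, h3π]
    field_simp
    ring
  · rw [LP1Aux.integral_gaussianReal m v hv]
    rw [show (fun x => (x - m) * (F x - 1/2) * gaussianPDFReal m v x)
        = (fun x => (x - m) * ((∫ t in Iic x, gaussianPDFReal m v t) - 1/2)
            * gaussianPDFReal m v x)
      from funext fun x => by rw [hF' x]]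
    rw [h2, show √(1/12) = (√12)⁻¹ by rw [one_div, Real.sqrt_inv], hs3, h3π]
    have hσ' : σ ≠ 0 := hσ.ne'
    have h3 : √3 ≠ 0 := by positivity
    field_simp
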